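/- Let N ≥ 1 and let b, β, c, γ, Γ : ℝ^N → ℝ satisfy Assumptions A with constants b₀, β₀, c₀, γ₀, Γ₀ ≥ 0 and functions f_c, f_γ. Then for every z₀ ∈ ℝ^N there exists a continuous nondecreasing function h : [0,∞) → [0,∞), depending only on N, z₀, the constants b₀, β₀, c₀, γ₀, Γ₀, and f_c, f_γ, such that every differentiable solution z : [0,T) → ℝ^N of the moment ODE system with z(0) = z₀ satisfies ‖z(t)‖_N^{2N} ≤ h(t) for all t ∈ [0,T). -/

import Mathlib

set_option maxHeartbeats 2000000

open MeasureTheory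

/-- The norm `‖x‖_N := (∑_{i=1}^N |x_i|^{2/i})^{1/2}` (components indexed by `Fin N`,
so `x i` is the `(i+1)`-th coordinate). -/
noncomputable def normN (N : ℕ) (x : Fin N → ℝ) : ℝ :=
  Real.sqrt (∑ i : Fin N, |x i| ^ ((2 : ℝ) / ((i : ℕ) + 1)))

/-- Extended components: `extComp N x j = x_j` for `1 ≤ j ≤ N`, with the conventions
`x_0 = 1` and `x_j = 0` for `j < 0`. -/
def extComp (N : ℕ) (x : Fin N → ℝ) (j : ℤ) : ℝ :=
  if h : 0 < j ∧ j ≤ (N : ℤ) then x ⟨(j - 1).toNat, by omega⟩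
  else if j = 0 then 1 else 0

/-- Right-hand side of the moment ODE system for the `(k+1)`-th component (`k : Fin N`). -/
noncomputable def momentRHS (N : ℕ) (b β c γ Γ : (Fin N → ℝ) → ℝ)
    (x : Fin N → ℝ) (k : Fin N) : ℝ :=
  (((k : ℕ) + 1 : ℝ) * β x + (((k : ℕ) + 1 : ℝ) * (k : ℕ) / 2) * Γ x) * x k
    + (((k : ℕ) + 1 : ℝ) * b x + (((k : ℕ) + 1 : ℝ) * (k : ℕ) / 2) * γ x)
        * extComp N x ((k : ℕ) : ℤ)
    + (((k : ℕ) + 1 : ℝ) * (k : ℕ) / 2) * c x * extComp N x (((k : ℕ) : ℤ) - 1)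

/-- `z` solves the moment ODE system on the set `I`. -/
def IsMomentSol (N : ℕ) (b β c γ Γ : (Fin N → ℝ) → ℝ) (I : Set ℝ)
    (z : ℝ → Fin N → ℝ) : Prop :=
  ∀ k : Fin N, ∀ t ∈ I,
    HasDerivWithinAt (fun s => z s k) (momentRHS N b β c γ Γ (z t) k) I t

/- ### Auxiliary lemmas -/

lemma gb_le {δ K ε : ℝ} (hδ : 0 ≤ δ) (hε : 0 ≤ ε) (hK : 0 < K) {t : ℝ} (ht : 0 ≤ t) :
    gronwallBound δ K ε t ≤ (δ + ε * t) * Real.exp (K * t) := by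
  rw [gronwallBound_of_K_ne_0 hK.ne']
  have hE : (0:ℝ) < Real.exp (K * t) := Real.exp_pos _
  have h1 : Real.exp (K * t) - 1 ≤ K * t * Real.exp (K * t) := by
    have h2 := Real.add_one_le_exp (-(K * t))
    rw [Real.exp_neg] at h2
    have h3 := mul_le_mul_of_nonneg_right h2 hE.le
    rw [inv_mul_cancel₀ hE.ne'] at h3
    nlinarith
  have h4 : ε / K * (Real.exp (K * t) - 1) ≤ ε / K * (K * t * Real.exp (K * t)) :=
    mul_le_mul_of_nonneg_left h1 (by positivity)
  have h5 : ε / K * (K * t * Real.exp (K * t)) = ε * t * Real.exp (K * t) := by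
    field_simp
  nlinarith [Real.exp_pos (K*t)]

lemma normN_sq_eq (N : ℕ) (x : Fin N → ℝ) :
    normN N x ^ 2 = ∑ i : Fin N, |x i| ^ ((2 : ℝ) / ((i : ℕ) + 1)) :=
  Real.sq_sqrt (Finset.sum_nonneg fun i _ => Real.rpow_nonneg (abs_nonneg _) _)

lemma a_pow (N : ℕ) (x : Fin N → ℝ) (i : Fin N) :
    (|x i| ^ ((2 : ℝ) / ((i : ℕ) + 1))) ^ ((i : ℕ) + 1) = (x i) ^ 2 := by
  have h1 : ((i:ℕ) + 1 : ℝ) ≠ 0 := by positivity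
  rw [← Real.rpow_natCast (|x i| ^ ((2 : ℝ) / ((i : ℕ) + 1))) ((i:ℕ)+1),
    ← Real.rpow_mul (abs_nonneg _)]
  push_cast
  rw [div_mul_cancel₀ _ h1]
  rw [show ((2:ℝ)) = ((2:ℕ):ℝ) by norm_num, Real.rpow_natCast, sq_abs]

lemma normN_sq_le (N : ℕ) (x : Fin N → ℝ) {M : ℝ} (hM : 1 ≤ M)
    (hm : ∀ j : Fin N, (x j) ^ 2 ≤ M ^ ((j : ℕ) + 1)) :
    normN N x ^ 2 ≤ N * M := by
  rw [normN_sq_eq]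
  have hle : ∀ i : Fin N, |x i| ^ ((2 : ℝ) / ((i : ℕ) + 1)) ≤ M := by
    intro i
    have h0 : (0:ℝ) ≤ M := by linarith
    refine le_of_pow_le_pow_left₀ (n := (i:ℕ)+1) (by omega) h0 ?_
    rw [a_pow]
    exact hm i
  calc ∑ i : Fin N, |x i| ^ ((2 : ℝ) / ((i : ℕ) + 1)) ≤ ∑ _i : Fin N, M :=
        Finset.sum_le_sum fun i _ => hle i
    _ = N * M := by simp [Finset.sum_const, Finset.card_univ, nsmul_eq_mul]

lemma extComp_zero (N : ℕ) (x : Fin N → ℝ) : extComp N x 0 = 1 := by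
  simp [extComp]

lemma extComp_succ (N : ℕ) (x : Fin N → ℝ) (m : ℕ) (hm : m < N) :
    extComp N x ((m : ℤ) + 1) = x ⟨m, hm⟩ := by
  have h : 0 < (m : ℤ) + 1 ∧ (m : ℤ) + 1 ≤ (N : ℤ) := by omega
  rw [extComp, dif_pos h]
  congr 1
  ext
  simp

lemma extComp_sq_le (N : ℕ) (x : Fin N → ℝ) {M : ℝ} (hM : 1 ≤ M)
    (hm : ∀ j : Fin N, (x j) ^ 2 ≤ M ^ ((j : ℕ) + 1)) (n : ℕ) (hn : n ≤ N) :
    (extComp N x (n : ℤ)) ^ 2 ≤ M ^ n := by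
  cases n with
  | zero => simp [extComp_zero]
  | succ m =>
    have hmN : m < N := by omega
    rw [show ((m + 1 : ℕ) : ℤ) = (m : ℤ) + 1 by push_cast; ring, extComp_succ N x m hmN]
    exact hm ⟨m, hmN⟩

lemma momentRHS_zero (N : ℕ) (hN : 0 < N) (b β c γ Γ : (Fin N → ℝ) → ℝ) (x : Fin N → ℝ) :
    momentRHS N b β c γ Γ x ⟨0, hN⟩ = β x * x ⟨0, hN⟩ + b x := by
  have h0 : ((⟨0, hN⟩ : Fin N) : ℕ) = 0 := rfl
  have e0 : extComp N x ((0:ℕ) : ℤ) = 1 := by simp [extComp]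
  have em : extComp N x (((0:ℕ) : ℤ) - 1) = 0 := by norm_num [extComp]
  rw [momentRHS, h0, e0, em]
  push_cast
  ring

lemma aux1 {a : ℝ} (ha : 1 ≤ a) : 2*(1+a) ≤ 4*(1+a)^2 := by nlinarith

lemma aux2 {a : ℝ} : (1+a)^2 * 1 ≤ 4*(1+a)^2 := by nlinarith [sq_nonneg (1+a)]

lemma aux3 {S Nr M : ℝ} (hS0 : 0 ≤ S) (hS2 : S^2 ≤ Nr*M) (hM : 1 ≤ M) :
    (1+S)^2 ≤ 2*(1+Nr)*M := by nlinarith [sq_nonneg (1-S)]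

lemma aux4 {a M : ℝ} (hM : 1 ≤ M) (ha : 0 ≤ a) : 1 + a*M ≤ (1+a)*M := by nlinarith

lemma aux5 {p q G S : ℝ} (hp : 0 ≤ p) (hq : 0 ≤ q) (hG : 0 ≤ G) (hS : 0 ≤ S) :
    p*G + q*(G*(1+S)) ≤ (p+q)*G*(1+S) := by nlinarith [mul_nonneg (mul_nonneg hp hG) hS]

lemma aux6 {a G S : ℝ} (h : a ≤ G) (hG : 1 ≤ G) (hS : 0 ≤ S) : a + S ≤ G*(1+S) := by nlinarith

lemma key_est (N : ℕ) (hN : 0 < N) (b β c γ Γ : (Fin N → ℝ) → ℝ)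
    (b₀ β₀ c₀ γ₀ Γ₀ : ℝ) (hb₀ : 0 ≤ b₀) (hβ₀ : 0 ≤ β₀) (hc₀ : 0 ≤ c₀)
    (hγ₀ : 0 ≤ γ₀) (hΓ₀ : 0 ≤ Γ₀)
    (f_c f_γ : ℝ → ℝ) (x : Fin N → ℝ) (Gv M : ℝ) (hM : 1 ≤ M)
    (hβ : |β x| ≤ β₀) (hΓ : |Γ x| ≤ Γ₀)
    (hb : |b x| ≤ b₀ * (1 + |x ⟨0,hN⟩|))
    (hγ : |γ x| ≤ γ₀ * (1 + f_γ |x ⟨0,hN⟩| + normN N x))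
    (hc : |c x| ≤ c₀ * (1 + f_c |x ⟨0,hN⟩| + (normN N x) ^ 2))
    (hGb : 1 + |x ⟨0,hN⟩| ≤ Gv)
    (hGγ : 1 + f_γ |x ⟨0,hN⟩| ≤ Gv)
    (hGc : 1 + f_c |x ⟨0,hN⟩| ≤ Gv)
    (hm : ∀ j : Fin N, (x j) ^ 2 ≤ M ^ ((j : ℕ) + 1)) (k : Fin N) :
    |x k * momentRHS N b β c γ Γ x k| ≤
      ((N:ℝ)*β₀ + (N:ℝ)^2*Γ₀ + ((N:ℝ)*b₀+(N:ℝ)^2*γ₀)*(2*(1+(N:ℝ)))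
        + (N:ℝ)^2*c₀*(2*(1+(N:ℝ))) + 1) * Gv * M ^ ((k:ℕ)+1) := by
  have hG1 : 1 ≤ Gv := le_trans (le_add_of_nonneg_right (abs_nonneg _)) hGb
  have hGv0 : (0:ℝ) ≤ Gv := by linarith
  have hM0 : (0:ℝ) ≤ M := by linarith
  set n := (k : ℕ) with hn
  have hnN : n + 1 ≤ N := k.isLt
  have hN1 : (1:ℝ) ≤ (N:ℝ) := by exact_mod_cast hN
  have hcn1 : ((n:ℝ) + 1) ≤ (N:ℝ) := by exact_mod_cast hnN
  have hcn1' : (0:ℝ) ≤ (n:ℝ) + 1 := by positivity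
  have hcn2 : ((n:ℝ) + 1) * n / 2 ≤ (N:ℝ)^2 := by
    have h1 : (n:ℝ) ≤ (N:ℝ) := by nlinarith
    nlinarith
  have hcn2' : (0:ℝ) ≤ ((n:ℝ) + 1) * n / 2 := by positivity
  set u := x k with hu
  set S := normN N x with hS
  set w₁ := extComp N x (n : ℤ) with hw1def
  set w₂ := extComp N x ((n : ℤ) - 1) with hw2def
  have hS0 : 0 ≤ S := Real.sqrt_nonneg _
  have hS2 : S ^ 2 ≤ (N:ℝ) * M := normN_sq_le N x hM hm
  have hu2 : u ^ 2 ≤ M ^ (n + 1) := hm k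
  have hw1 : w₁ ^ 2 ≤ M ^ n := extComp_sq_le N x hM hm n (by omega)
  have hMn1 : (1:ℝ) ≤ M ^ (n+1) := one_le_pow₀ hM
  have hMn1' : (0:ℝ) ≤ M ^ (n+1) := by positivity
  have hMn : (0:ℝ) ≤ M ^ n := by positivity
  -- Q1 : (1 + S) * |u * w₁| ≤ 2 * (1+N) * M^(n+1)
  have hQ1 : (1 + S) * |u * w₁| ≤ 2 * (1+(N:ℝ)) * M ^ (n+1) := by
    have hrhs : (0:ℝ) ≤ 2 * (1+(N:ℝ)) * M ^ (n+1) := by positivity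
    refine le_of_pow_le_pow_left₀ two_ne_zero hrhs ?_
    have hprod : u^2 * w₁^2 ≤ M^(n+1) * M^n :=
      mul_le_mul hu2 hw1 (sq_nonneg _) hMn1'
    have he2 : (1+S)^2 ≤ 2*(1+(N:ℝ))*M := aux3 hS0 hS2 hM
    have hps : M ^ (n+1) = M ^ n * M := pow_succ M n
    calc ((1+S) * |u * w₁|)^2 = (1+S)^2 * (u^2 * w₁^2) := by
          rw [mul_pow, sq_abs, mul_pow]
      _ ≤ (2*(1+(N:ℝ))*M) * (M^(n+1) * M^n) := by
          apply mul_le_mul he2 hprod (by positivity) (by positivity)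
      _ = (2*(1+(N:ℝ))) * (M^n*M)^2 := by rw [hps]; ring
      _ ≤ (4*(1+(N:ℝ))^2) * (M^n*M)^2 :=
          mul_le_mul_of_nonneg_right (aux1 hN1) (sq_nonneg _)
      _ = (2 * (1+(N:ℝ)) * M ^ (n+1))^2 := by rw [hps]; ring
  -- term 1
  have ha1 : |((n:ℝ)+1) * β x + (((n:ℝ)+1) * n / 2) * Γ x| ≤ (N:ℝ)*β₀ + (N:ℝ)^2*Γ₀ := by
    calc |((n:ℝ)+1) * β x + (((n:ℝ)+1) * n / 2) * Γ x|
        ≤ |((n:ℝ)+1) * β x| + |(((n:ℝ)+1) * n / 2) * Γ x| := abs_add_le _ _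
      _ = ((n:ℝ)+1) * |β x| + (((n:ℝ)+1) * n / 2) * |Γ x| := by
          rw [abs_mul, abs_mul, abs_of_nonneg hcn1', abs_of_nonneg hcn2']
      _ ≤ (N:ℝ)*β₀ + (N:ℝ)^2*Γ₀ := by
          apply add_le_add (mul_le_mul hcn1 hβ (abs_nonneg _) (by positivity))
            (mul_le_mul hcn2 hΓ (abs_nonneg _) (by positivity))
  have t1 : |((n:ℝ)+1) * β x + (((n:ℝ)+1) * n / 2) * Γ x| * (u^2)
      ≤ ((N:ℝ)*β₀ + (N:ℝ)^2*Γ₀) * (Gv * M^(n+1)) := by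
    have : u^2 ≤ Gv * M^(n+1) := le_trans hu2 (le_mul_of_one_le_left hMn1' hG1)
    exact mul_le_mul ha1 this (sq_nonneg _) (by positivity)
  -- term 2
  have ha2 : |((n:ℝ)+1) * b x + (((n:ℝ)+1) * n / 2) * γ x|
      ≤ ((N:ℝ)*b₀+(N:ℝ)^2*γ₀) * Gv * (1 + S) := by
    have e1 : |((n:ℝ)+1) * b x + (((n:ℝ)+1) * n / 2) * γ x|
        ≤ ((n:ℝ)+1) * |b x| + (((n:ℝ)+1) * n / 2) * |γ x| := by
      calc _ ≤ |((n:ℝ)+1) * b x| + |(((n:ℝ)+1) * n / 2) * γ x| := abs_add_le _ _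
        _ = _ := by rw [abs_mul, abs_mul, abs_of_nonneg hcn1', abs_of_nonneg hcn2']
    have e2 : ((n:ℝ)+1) * |b x| ≤ (N:ℝ) * (b₀ * Gv) := by
      have : |b x| ≤ b₀ * Gv :=
        le_trans hb (mul_le_mul_of_nonneg_left hGb hb₀)
      exact mul_le_mul hcn1 this (abs_nonneg _) (by positivity)
    have e3 : (((n:ℝ)+1) * n / 2) * |γ x| ≤ (N:ℝ)^2 * (γ₀ * (Gv * (1+S))) := by
      have h1 : |γ x| ≤ γ₀ * (Gv * (1+S)) := by
        refine le_trans hγ (mul_le_mul_of_nonneg_left ?_ hγ₀)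
        exact aux6 hGγ hG1 hS0
      exact mul_le_mul hcn2 h1 (abs_nonneg _) (by positivity)
    calc _ ≤ ((n:ℝ)+1) * |b x| + (((n:ℝ)+1) * n / 2) * |γ x| := e1
      _ ≤ (N:ℝ) * (b₀ * Gv) + (N:ℝ)^2 * (γ₀ * (Gv * (1+S))) := add_le_add e2 e3
      _ ≤ ((N:ℝ)*b₀+(N:ℝ)^2*γ₀) * Gv * (1 + S) := by
          have := aux5 (p := (N:ℝ)*b₀) (q := (N:ℝ)^2*γ₀) (G := Gv) (S := S)
            (by positivity) (by positivity) hGv0 hS0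
          calc (N:ℝ) * (b₀ * Gv) + (N:ℝ)^2 * (γ₀ * (Gv * (1+S)))
              = (N:ℝ)*b₀*Gv + (N:ℝ)^2*γ₀*(Gv*(1+S)) := by ring
            _ ≤ ((N:ℝ)*b₀+(N:ℝ)^2*γ₀) * Gv * (1 + S) := this
  have t2 : |((n:ℝ)+1) * b x + (((n:ℝ)+1) * n / 2) * γ x| * |u * w₁|
      ≤ (((N:ℝ)*b₀+(N:ℝ)^2*γ₀)*(2*(1+(N:ℝ)))) * (Gv * M^(n+1)) := by
    calc |((n:ℝ)+1) * b x + (((n:ℝ)+1) * n / 2) * γ x| * |u * w₁|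
        ≤ (((N:ℝ)*b₀+(N:ℝ)^2*γ₀) * Gv) * ((1 + S) * |u * w₁|) := by
          have h1 := mul_le_mul_of_nonneg_right ha2 (abs_nonneg (u * w₁))
          calc |((n:ℝ)+1) * b x + (((n:ℝ)+1) * n / 2) * γ x| * |u * w₁|
              ≤ ((N:ℝ)*b₀+(N:ℝ)^2*γ₀) * Gv * (1+S) * |u * w₁| := h1
            _ = (((N:ℝ)*b₀+(N:ℝ)^2*γ₀) * Gv) * ((1 + S) * |u * w₁|) := by ring
      _ ≤ (((N:ℝ)*b₀+(N:ℝ)^2*γ₀) * Gv) * (2*(1+(N:ℝ))*M^(n+1)) := by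
          exact mul_le_mul_of_nonneg_left hQ1 (by positivity)
      _ = (((N:ℝ)*b₀+(N:ℝ)^2*γ₀)*(2*(1+(N:ℝ)))) * (Gv * M^(n+1)) := by ring
  -- term 3
  have t3 : (((n:ℝ)+1) * n / 2) * |c x| * |u * w₂|
      ≤ ((N:ℝ)^2*c₀*(2*(1+(N:ℝ)))) * (Gv * M^(n+1)) := by
    rcases Nat.eq_zero_or_pos n with hn0 | hn1
    · simp [hn0]
      positivity
    · -- n ≥ 1
      have hw2 : w₂ ^ 2 ≤ M ^ (n - 1) := by
        rw [hw2def, show ((n:ℤ) - 1) = ((n - 1 : ℕ) : ℤ) by omega]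
        exact extComp_sq_le N x hM hm (n-1) (by omega)
      have hQ2 : (1 + (N:ℝ)*M) * |u * w₂| ≤ 2*(1+(N:ℝ)) * M^(n+1) := by
        have hrhs : (0:ℝ) ≤ 2 * (1+(N:ℝ)) * M ^ (n+1) := by positivity
        refine le_of_pow_le_pow_left₀ two_ne_zero hrhs ?_
        have hprod : u^2 * w₂^2 ≤ M^(n+1) * M^(n-1) :=
          mul_le_mul hu2 hw2 (sq_nonneg _) hMn1'
        have hpid : M^(n+1) * M^(n-1) = (M^n)^2 := by
          rw [← pow_add, ← pow_mul]
          congr 1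
          omega
        have hb2 : (1:ℝ)+(N:ℝ)*M ≤ (1+(N:ℝ))*M := aux4 hM (by positivity)
        have he2 : (1+(N:ℝ)*M)^2 ≤ ((1+(N:ℝ))*M)^2 :=
          pow_le_pow_left₀ (by positivity) hb2 2
        calc ((1 + (N:ℝ)*M) * |u * w₂|)^2 = (1+(N:ℝ)*M)^2 * (u^2 * w₂^2) := by
              rw [mul_pow, sq_abs, mul_pow]
          _ ≤ ((1+(N:ℝ))*M)^2 * (M^n)^2 := by
              rw [hpid] at hprod
              exact mul_le_mul he2 hprod (by positivity) (by positivity)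
          _ = ((1+(N:ℝ))^2 * 1) * (M^n*M)^2 := by ring
          _ ≤ (4*(1+(N:ℝ))^2) * (M^n*M)^2 :=
              mul_le_mul_of_nonneg_right aux2 (sq_nonneg _)
          _ = (2 * (1+(N:ℝ)) * M ^ (n+1))^2 := by rw [pow_succ M n]; ring
      have hc' : |c x| ≤ c₀ * (Gv * (1 + (N:ℝ)*M)) := by
        refine le_trans hc (mul_le_mul_of_nonneg_left ?_ hc₀)
        have h1 : S^2 ≤ (N:ℝ)*M := hS2
        have := aux6 (a := 1 + f_c |x ⟨0,hN⟩|) (G := Gv) (S := (N:ℝ)*M) hGc hG1 (by positivity)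
        linarith
      calc (((n:ℝ)+1) * n / 2) * |c x| * |u * w₂|
          ≤ ((N:ℝ)^2 * (c₀ * (Gv * (1 + (N:ℝ)*M)))) * |u * w₂| := by
            apply mul_le_mul_of_nonneg_right _ (abs_nonneg _)
            exact mul_le_mul hcn2 hc' (abs_nonneg _) (by positivity)
        _ = ((N:ℝ)^2 * c₀ * Gv) * ((1 + (N:ℝ)*M) * |u * w₂|) := by ring
        _ ≤ ((N:ℝ)^2 * c₀ * Gv) * (2*(1+(N:ℝ)) * M^(n+1)) :=
            mul_le_mul_of_nonneg_left hQ2 (by positivity)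
        _ = ((N:ℝ)^2*c₀*(2*(1+(N:ℝ)))) * (Gv * M^(n+1)) := by ring
  -- combine
  have hsplit : |u * momentRHS N b β c γ Γ x k|
      ≤ |((n:ℝ)+1) * β x + (((n:ℝ)+1) * n / 2) * Γ x| * (u^2)
        + |((n:ℝ)+1) * b x + (((n:ℝ)+1) * n / 2) * γ x| * |u * w₁|
        + (((n:ℝ)+1) * n / 2) * |c x| * |u * w₂| := by
    rw [momentRHS]
    have : u * ((((n:ℝ)+1) * β x + (((n:ℝ)+1) * n / 2) * Γ x) * u
        + (((n:ℝ)+1) * b x + (((n:ℝ)+1) * n / 2) * γ x) * w₁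
        + (((n:ℝ)+1) * n / 2) * c x * w₂)
        = (((n:ℝ)+1) * β x + (((n:ℝ)+1) * n / 2) * Γ x) * u^2
        + (((n:ℝ)+1) * b x + (((n:ℝ)+1) * n / 2) * γ x) * (u * w₁)
        + (((n:ℝ)+1) * n / 2) * c x * (u * w₂) := by ring
    rw [this]
    calc _ ≤ |(((n:ℝ)+1) * β x + (((n:ℝ)+1) * n / 2) * Γ x) * u^2
          + (((n:ℝ)+1) * b x + (((n:ℝ)+1) * n / 2) * γ x) * (u * w₁)|
          + |(((n:ℝ)+1) * n / 2) * c x * (u * w₂)| := abs_add_le _ _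
      _ ≤ |(((n:ℝ)+1) * β x + (((n:ℝ)+1) * n / 2) * Γ x) * u^2|
          + |(((n:ℝ)+1) * b x + (((n:ℝ)+1) * n / 2) * γ x) * (u * w₁)|
          + |(((n:ℝ)+1) * n / 2) * c x * (u * w₂)| := by
            have := abs_add_le ((((n:ℝ)+1) * β x + (((n:ℝ)+1) * n / 2) * Γ x) * u^2)
              ((((n:ℝ)+1) * b x + (((n:ℝ)+1) * n / 2) * γ x) * (u * w₁))
            linarith
      _ = |((n:ℝ)+1) * β x + (((n:ℝ)+1) * n / 2) * Γ x| * (u^2)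
          + |((n:ℝ)+1) * b x + (((n:ℝ)+1) * n / 2) * γ x| * |u * w₁|
          + (((n:ℝ)+1) * n / 2) * |c x| * |u * w₂| := by
            simp only [abs_mul, abs_of_nonneg hcn2', abs_of_nonneg (sq_nonneg u)]
  have hslack : (0:ℝ) ≤ 1 * (Gv * M^(n+1)) := by positivity
  calc |u * momentRHS N b β c γ Γ x k| ≤ _ := hsplit
    _ ≤ ((N:ℝ)*β₀ + (N:ℝ)^2*Γ₀) * (Gv * M^(n+1))
        + (((N:ℝ)*b₀+(N:ℝ)^2*γ₀)*(2*(1+(N:ℝ)))) * (Gv * M^(n+1))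
        + ((N:ℝ)^2*c₀*(2*(1+(N:ℝ)))) * (Gv * M^(n+1)) := by
          exact add_le_add (add_le_add t1 t2) t3
    _ ≤ _ := by
          have : ((N:ℝ)*β₀ + (N:ℝ)^2*Γ₀ + ((N:ℝ)*b₀+(N:ℝ)^2*γ₀)*(2*(1+(N:ℝ)))
              + (N:ℝ)^2*c₀*(2*(1+(N:ℝ))) + 1) * Gv * M ^ (n+1)
              = ((N:ℝ)*β₀ + (N:ℝ)^2*Γ₀) * (Gv * M^(n+1))
              + (((N:ℝ)*b₀+(N:ℝ)^2*γ₀)*(2*(1+(N:ℝ)))) * (Gv * M^(n+1))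
              + ((N:ℝ)^2*c₀*(2*(1+(N:ℝ)))) * (Gv * M^(n+1)) + 1 * (Gv * M^(n+1)) := by ring
          linarith

/-- Under Assumptions A, for each initial value there is a continuous
nondecreasing function `h` on `[0,∞)` (depending only on `N`, `z₀`, the constants and
`f_c`, `f_γ`) bounding `‖z(t)‖_N^{2N}` along every solution of the moment ODE system
started at `z₀`. -/
theorem stmt_9 (N : ℕ) (hN : 0 < N)
    (b β c γ Γ : (Fin N → ℝ) → ℝ)
    (b₀ β₀ c₀ γ₀ Γ₀ : ℝ) (hb₀ : 0 ≤ b₀) (hβ₀ : 0 ≤ β₀) (hc₀ : 0 ≤ c₀)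
    (hγ₀ : 0 ≤ γ₀) (hΓ₀ : 0 ≤ Γ₀)
    (f_c f_γ : ℝ → ℝ)
    (hfc_cont : ContinuousOn f_c (Set.Ici 0)) (hfc_mono : MonotoneOn f_c (Set.Ici 0))
    (hfc_nonneg : ∀ s ∈ Set.Ici (0 : ℝ), 0 ≤ f_c s)
    (hfγ_cont : ContinuousOn f_γ (Set.Ici 0)) (hfγ_mono : MonotoneOn f_γ (Set.Ici 0))
    (hfγ_nonneg : ∀ s ∈ Set.Ici (0 : ℝ), 0 ≤ f_γ s)
    (hβb : ∀ x, |β x| ≤ β₀) (hΓb : ∀ x, |Γ x| ≤ Γ₀)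
    (hbb : ∀ x : Fin N → ℝ, |b x| ≤ b₀ * (1 + |x ⟨0, hN⟩|))
    (hγb : ∀ x : Fin N → ℝ, |γ x| ≤ γ₀ * (1 + f_γ |x ⟨0, hN⟩| + normN N x))
    (hcb : ∀ x : Fin N → ℝ, |c x| ≤ c₀ * (1 + f_c |x ⟨0, hN⟩| + (normN N x) ^ 2))
    (z₀ : Fin N → ℝ) :
    ∃ h : ℝ → ℝ,
      ContinuousOn h (Set.Ici 0) ∧ MonotoneOn h (Set.Ici 0) ∧
      (∀ t ∈ Set.Ici (0 : ℝ), 0 ≤ h t) ∧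
      ∀ (T : ℝ) (z : ℝ → Fin N → ℝ), z 0 = z₀ →
        IsMomentSol N b β c γ Γ (Set.Ico 0 T) z →
        ∀ t ∈ Set.Ico (0 : ℝ) T, (normN N (z t)) ^ (2 * N) ≤ h t := by
  classical
  set k0 : Fin N := ⟨0, hN⟩ with hk0
  set L := N.factorial with hLdef
  have hLpos : 0 < L := N.factorial_pos
  have hNL : N ≤ L := Nat.self_le_factorial N
  set e : Fin N → ℕ := fun k => L / ((k : ℕ) + 1) with hedef
  have heL : ∀ k : Fin N, ((k:ℕ) + 1) * e k = L := by
    intro k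
    exact Nat.mul_div_cancel' (Nat.dvd_factorial (Nat.succ_pos _) k.isLt)
  have hepos : ∀ k : Fin N, 0 < e k := by
    intro k
    rcases Nat.eq_zero_or_pos (e k) with h | h
    · exfalso; have := heL k; rw [h] at this; omega
    · exact h
  have heleL : ∀ k : Fin N, e k ≤ L := fun k => Nat.div_le_self _ _
  -- first-component a priori bound
  set δ₁ : ℝ := |z₀ k0| with hδ₁def
  have hδ₁0 : 0 ≤ δ₁ := abs_nonneg _
  set K₁ : ℝ := β₀ + b₀ + 1 with hK₁def
  have hK₁pos : 0 < K₁ := by rw [hK₁def]; linarith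
  set A : ℝ → ℝ := fun t => (δ₁ + b₀ * t) * Real.exp (K₁ * t) with hAdef
  have hA0 : ∀ t, 0 ≤ t → 0 ≤ A t := by
    intro t ht
    have : 0 ≤ δ₁ + b₀ * t := by nlinarith
    exact mul_nonneg this (Real.exp_pos _).le
  have hAmono : ∀ s t, 0 ≤ s → s ≤ t → A s ≤ A t := by
    intro s t hs hst
    have h1 : δ₁ + b₀ * s ≤ δ₁ + b₀ * t := by nlinarith
    have h2 : Real.exp (K₁ * s) ≤ Real.exp (K₁ * t) := by
      apply Real.exp_le_exp.2
      nlinarith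
    exact mul_le_mul h1 h2 (Real.exp_pos _).le (by nlinarith)
  set G : ℝ → ℝ := fun t => 1 + f_c (A t) + f_γ (A t) + A t with hGdef
  have hG1 : ∀ t, 0 ≤ t → 1 ≤ G t := by
    intro t ht
    have h1 := hfc_nonneg (A t) (Set.mem_Ici.2 (hA0 t ht))
    have h2 := hfγ_nonneg (A t) (Set.mem_Ici.2 (hA0 t ht))
    have h3 := hA0 t ht
    simp only [hGdef]; linarith
  have hGmono : ∀ s t, 0 ≤ s → s ≤ t → G s ≤ G t := by
    intro s t hs hst
    have hAs := hA0 s hs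
    have hAt := hA0 t (le_trans hs hst)
    have hA := hAmono s t hs hst
    have h1 := hfc_mono (Set.mem_Ici.2 hAs) (Set.mem_Ici.2 hAt) hA
    have h2 := hfγ_mono (Set.mem_Ici.2 hAs) (Set.mem_Ici.2 hAt) hA
    simp only [hGdef]; linarith
  set C₁ : ℝ := (N:ℝ)*β₀ + (N:ℝ)^2*Γ₀ + ((N:ℝ)*b₀+(N:ℝ)^2*γ₀)*(2*(1+(N:ℝ)))
      + (N:ℝ)^2*c₀*(2*(1+(N:ℝ))) + 1 with hC₁def
  have hC₁1 : 1 ≤ C₁ := by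
    have h1 : 0 ≤ (N:ℝ)*β₀ := mul_nonneg (Nat.cast_nonneg N) hβ₀
    have h2 : 0 ≤ (N:ℝ)^2*Γ₀ := mul_nonneg (by positivity) hΓ₀
    have h3 : 0 ≤ ((N:ℝ)*b₀+(N:ℝ)^2*γ₀)*(2*(1+(N:ℝ))) :=
      mul_nonneg (add_nonneg (mul_nonneg (Nat.cast_nonneg N) hb₀)
        (mul_nonneg (by positivity) hγ₀)) (by positivity)
    have h4 : 0 ≤ (N:ℝ)^2*c₀*(2*(1+(N:ℝ))) :=
      mul_nonneg (mul_nonneg (by positivity) hc₀) (by positivity)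
    simp only [hC₁def]; linarith
  have hC₁0 : 0 ≤ C₁ := by linarith
  set KB : ℝ → ℝ := fun t => 2*(N:ℝ)*(L:ℝ)*C₁ * G t with hKBdef
  have hcf0 : 0 < 2*(N:ℝ)*(L:ℝ)*C₁ := by
    have hn : (0:ℝ) < (N:ℝ) := by exact_mod_cast hN
    have hl : (0:ℝ) < (L:ℝ) := by exact_mod_cast hLpos
    have hc : (0:ℝ) < C₁ := lt_of_lt_of_le one_pos hC₁1
    exact mul_pos (mul_pos (mul_pos two_pos hn) hl) hc
  have hKBpos : ∀ t, 0 ≤ t → 0 < KB t := by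
    intro t ht
    have h1 := hG1 t ht
    simp only [hKBdef]
    nlinarith [hcf0, mul_le_mul_of_nonneg_left h1 hcf0.le]
  have hKBmono : ∀ s t, 0 ≤ s → s ≤ t → KB s ≤ KB t := by
    intro s t hs hst
    simp only [hKBdef]
    exact mul_le_mul_of_nonneg_left (hGmono s t hs hst) hcf0.le
  set V₀ : ℝ := ∑ k : Fin N, (z₀ k)^(2 * e k) with hV₀def
  have hV₀0 : 0 ≤ V₀ := Finset.sum_nonneg fun k _ => by rw [pow_mul]; positivity
  refine ⟨fun t => (N:ℝ)^N * (1 + (V₀ + KB t * t) * Real.exp (KB t * t)), ?_, ?_, ?_, ?_⟩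
  · -- continuity
    have hAc : Continuous A := by
      rw [hAdef]; fun_prop
    have hmaps : Set.MapsTo A (Set.Ici 0) (Set.Ici 0) := fun t ht =>
      Set.mem_Ici.2 (hA0 t (Set.mem_Ici.1 ht))
    have hGc : ContinuousOn G (Set.Ici 0) := by
      rw [hGdef]
      exact ((continuousOn_const.add (hfc_cont.comp hAc.continuousOn hmaps)).add
        (hfγ_cont.comp hAc.continuousOn hmaps)).add hAc.continuousOn
    have hKBc : ContinuousOn KB (Set.Ici 0) := by
      rw [hKBdef]; exact continuousOn_const.mul hGc
    have hKBt : ContinuousOn (fun t => KB t * t) (Set.Ici 0) :=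
      hKBc.mul continuousOn_id
    exact continuousOn_const.mul (continuousOn_const.add
      ((continuousOn_const.add hKBt).mul (Real.continuous_exp.comp_continuousOn hKBt)))
  · -- monotonicity
    intro s hs t ht hst
    have hs0 : (0:ℝ) ≤ s := hs
    have ht0 : (0:ℝ) ≤ t := ht
    have h1 : KB s ≤ KB t := hKBmono s t hs0 hst
    have hKBs0 : 0 ≤ KB s := (hKBpos s hs0).le
    have hKBt0 : 0 ≤ KB t := (hKBpos t ht0).le
    have h2 : KB s * s ≤ KB t * t := mul_le_mul h1 hst hs0 hKBt0
    have h3 : Real.exp (KB s * s) ≤ Real.exp (KB t * t) := Real.exp_le_exp.2 h2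
    have h4 : V₀ + KB s * s ≤ V₀ + KB t * t := by linarith
    have h5 : (V₀ + KB s * s) * Real.exp (KB s * s) ≤ (V₀ + KB t * t) * Real.exp (KB t * t) :=
      mul_le_mul h4 h3 (Real.exp_pos _).le (by nlinarith [mul_nonneg hKBt0 ht0])
    have h6 : 0 ≤ (N:ℝ)^N := by positivity
    show (N:ℝ)^N * (1 + (V₀ + KB s * s) * Real.exp (KB s * s))
      ≤ (N:ℝ)^N * (1 + (V₀ + KB t * t) * Real.exp (KB t * t))
    exact mul_le_mul_of_nonneg_left (by linarith) h6
  · -- nonnegativity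
    intro t ht
    have ht0 : (0:ℝ) ≤ t := ht
    have h1 : 0 ≤ KB t * t := mul_nonneg (hKBpos t ht0).le ht0
    have h2 : 0 ≤ (V₀ + KB t * t) * Real.exp (KB t * t) :=
      mul_nonneg (by linarith) (Real.exp_pos _).le
    have h3 : 0 ≤ (N:ℝ)^N := by positivity
    show 0 ≤ (N:ℝ)^N * (1 + (V₀ + KB t * t) * Real.exp (KB t * t))
    exact mul_nonneg h3 (by linarith)
  · -- main bound
    intro T z hz0 hsol t ht
    obtain ⟨ht0, htT⟩ := ht
    have hIco : ∀ {s : ℝ}, 0 ≤ s → s < T → Set.Ico (0:ℝ) T ∈ nhdsWithin s (Set.Ici s) := by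
      intro s hs hsT
      rw [mem_nhdsWithin]
      exact ⟨Set.Iio T, isOpen_Iio, hsT, fun y hy => ⟨le_trans hs hy.2, hy.1⟩⟩
    -- Step 1 : first component bound
    have step1 : ∀ s, 0 ≤ s → s < T → |z s k0| ≤ A s := by
      intro s hs hsT
      have hsub : Set.Icc (0:ℝ) s ⊆ Set.Ico 0 T := fun r hr =>
        ⟨hr.1, lt_of_le_of_lt hr.2 hsT⟩
      have hcont : ContinuousOn (fun r => z r k0) (Set.Icc 0 s) := fun r hr =>
        ((hsol k0 r (hsub hr)).continuousWithinAt).mono hsub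
      have hderiv : ∀ r ∈ Set.Ico (0:ℝ) s, HasDerivWithinAt (fun r => z r k0)
          (momentRHS N b β c γ Γ (z r) k0) (Set.Ici r) r := by
        intro r hr
        have hrT : r < T := lt_trans hr.2 hsT
        exact (hsol k0 r ⟨hr.1, hrT⟩).mono_of_mem_nhdsWithin (hIco hr.1 hrT)
      have hbound : ∀ r ∈ Set.Ico (0:ℝ) s,
          ‖momentRHS N b β c γ Γ (z r) k0‖ ≤ K₁ * ‖z r k0‖ + b₀ := by
        intro r _
        rw [hk0, momentRHS_zero N hN, Real.norm_eq_abs, Real.norm_eq_abs]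
        have e1 : |β (z r) * z r ⟨0, hN⟩ + b (z r)|
            ≤ |β (z r)| * |z r ⟨0, hN⟩| + |b (z r)| := by
          refine le_trans (abs_add_le _ _) ?_
          rw [abs_mul]
        have e2 : |β (z r)| * |z r ⟨0, hN⟩| ≤ β₀ * |z r ⟨0, hN⟩| :=
          mul_le_mul_of_nonneg_right (hβb _) (abs_nonneg _)
        have e3 := hbb (z r)
        have e4 : (0:ℝ) ≤ |z r ⟨0, hN⟩| := abs_nonneg _
        rw [hK₁def]
        nlinarith
      have hinit : ‖z 0 k0‖ ≤ δ₁ := by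
        rw [hz0, Real.norm_eq_abs, hδ₁def]
      have := norm_le_gronwallBound_of_norm_deriv_right_le hcont hderiv hinit hbound s
        (Set.right_mem_Icc.2 hs)
      rw [sub_zero] at this
      calc |z s k0| = ‖z s k0‖ := rfl
        _ ≤ gronwallBound δ₁ K₁ b₀ s := this
        _ ≤ (δ₁ + b₀*s) * Real.exp (K₁*s) := gb_le hδ₁0 hb₀ hK₁pos hs
        _ = A s := by rw [hAdef]
    -- the Lyapunov function
    set Vf : ℝ → ℝ := fun s => ∑ k : Fin N, (z s k)^(2 * e k) with hVfdef
    set Vd : ℝ → ℝ := fun s => ∑ k : Fin N,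
      ((2 * e k : ℕ):ℝ) * (z s k)^(2 * e k - 1) * momentRHS N b β c γ Γ (z s) k with hVddef
    have hVf0 : ∀ s, 0 ≤ Vf s := fun s =>
      Finset.sum_nonneg fun k _ => by
        show (0:ℝ) ≤ z s k ^ (2 * e k)
        rw [pow_mul]; positivity
    have hMB : ∀ s, ∃ M : ℝ, 1 ≤ M ∧ M ^ L = 1 + Vf s ∧
        ∀ j : Fin N, (z s j)^2 ≤ M^((j:ℕ)+1) := by
      intro s
      have hP1 : 1 ≤ 1 + Vf s := by have := hVf0 s; linarith
      have hP0 : (0:ℝ) ≤ 1 + Vf s := by linarith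
      have hML : ((1 + Vf s) ^ ((L:ℝ)⁻¹)) ^ L = 1 + Vf s :=
        Real.rpow_inv_natCast_pow hP0 (by omega)
      set M := (1 + Vf s) ^ ((L:ℝ)⁻¹) with hMdef
      have hM0 : 0 ≤ M := Real.rpow_nonneg hP0 _
      have hM1 : 1 ≤ M := by
        by_contra hlt
        push_neg at hlt
        have := pow_lt_pow_left₀ hlt hM0 (by omega : L ≠ 0)
        rw [hML, one_pow] at this
        linarith
      refine ⟨M, hM1, hML, ?_⟩
      intro j
      have h1 : ((z s j)^2)^(e j) ≤ 1 + Vf s := by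
        have hmem : (z s j)^(2 * e j) ≤ Vf s := by
          rw [hVfdef]
          exact Finset.single_le_sum (f := fun k => (z s k)^(2 * e k))
            (fun k _ => by
              show (0:ℝ) ≤ z s k ^ (2 * e k)
              rw [pow_mul]; positivity) (Finset.mem_univ j)
        rw [pow_mul] at hmem
        linarith
      have h2 : (M^((j:ℕ)+1))^(e j) = 1 + Vf s := by
        rw [← pow_mul, heL j, hML]
      exact le_of_pow_le_pow_left₀ (hepos j).ne' (by positivity) (h1.trans_eq h2.symm)
    -- derivative of Vf
    have hVd' : ∀ s, 0 ≤ s → s < T → HasDerivWithinAt Vf (Vd s) (Set.Ici s) s := by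
      intro s hs hsT
      have h1 : HasDerivWithinAt Vf (Vd s) (Set.Ico 0 T) s := by
        rw [hVfdef, hVddef]
        exact HasDerivWithinAt.fun_sum fun k _ => (hsol k s ⟨hs, hsT⟩).pow (2 * e k)
      exact h1.mono_of_mem_nhdsWithin (hIco hs hsT)
    -- bound on the derivative
    have hKbound : ∀ s, 0 ≤ s → s ≤ t → |Vd s| ≤ KB t * (1 + Vf s) := by
      intro s hs hst
      have hsT : s < T := lt_of_le_of_lt hst htT
      obtain ⟨M, hM1, hML, hm⟩ := hMB s
      have hM0 : (0:ℝ) ≤ M := by linarith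
      have hGt1 : 1 ≤ G t := hG1 t ht0
      have hGt0 : 0 ≤ G t := by linarith
      have hzs : |z s k0| ≤ A t := le_trans (step1 s hs hsT) (hAmono s t hs hst)
      have hzs0 : (0:ℝ) ≤ |z s k0| := abs_nonneg _
      have hAt0 : 0 ≤ A t := hA0 t ht0
      have hfc0 : 0 ≤ f_c (A t) := hfc_nonneg _ (Set.mem_Ici.2 hAt0)
      have hfγ0 : 0 ≤ f_γ (A t) := hfγ_nonneg _ (Set.mem_Ici.2 hAt0)
      have hGb : 1 + |z s k0| ≤ G t := by simp only [hGdef]; linarith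
      have hGγ : 1 + f_γ |z s k0| ≤ G t := by
        have := hfγ_mono (Set.mem_Ici.2 hzs0) (Set.mem_Ici.2 hAt0) hzs
        simp only [hGdef]; linarith
      have hGc : 1 + f_c |z s k0| ≤ G t := by
        have := hfc_mono (Set.mem_Ici.2 hzs0) (Set.mem_Ici.2 hAt0) hzs
        simp only [hGdef]; linarith
      have hP0 : (0:ℝ) ≤ 1 + Vf s := by have := hVf0 s; linarith
      have hper : ∀ k : Fin N,
          |((2 * e k : ℕ):ℝ) * (z s k)^(2 * e k - 1) * momentRHS N b β c γ Γ (z s) k|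
            ≤ 2*(L:ℝ) * (C₁ * G t * (1 + Vf s)) := by
        intro k
        have hkey := key_est N hN b β c γ Γ b₀ β₀ c₀ γ₀ Γ₀ hb₀ hβ₀ hc₀ hγ₀ hΓ₀
          f_c f_γ (z s) (G t) M hM1 (hβb _) (hΓb _) (hbb _) (hγb _) (hcb _)
          (by rw [← hk0]; exact hGb) (by rw [← hk0]; exact hGγ) (by rw [← hk0]; exact hGc)
          hm k
        rw [← hC₁def] at hkey
        have hq1 : 1 ≤ e k := hepos k
        have h2q : 2 * e k - 1 = 2*(e k - 1) + 1 := by omega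
        have habs : |((2 * e k : ℕ):ℝ) * (z s k)^(2 * e k - 1) * momentRHS N b β c γ Γ (z s) k|
            = (2*(e k:ℝ)) * (((z s k)^2)^(e k - 1) * |z s k * momentRHS N b β c γ Γ (z s) k|) := by
          rw [abs_mul, abs_mul, abs_pow]
          rw [Nat.abs_cast]
          rw [h2q, pow_succ, pow_mul, sq_abs]
          push_cast
          rw [abs_mul]
          ring
        rw [habs]
        have hpk : ((z s k)^2)^(e k - 1) ≤ (M^((k:ℕ)+1))^(e k - 1) :=
          pow_le_pow_left₀ (sq_nonneg _) (hm k) _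
        have hexp : (M^((k:ℕ)+1))^(e k - 1) * M^((k:ℕ)+1) = 1 + Vf s := by
          rw [← pow_mul, ← pow_add]
          have h4 : e k - 1 + 1 = e k := by omega
          have h3 : ((k:ℕ)+1)*(e k - 1) + ((k:ℕ)+1) = ((k:ℕ)+1) * e k := by
            calc ((k:ℕ)+1)*(e k - 1) + ((k:ℕ)+1) = ((k:ℕ)+1)*((e k - 1)+1) := by ring
              _ = _ := by rw [h4]
          rw [h3, heL k, hML]
        have hstep : ((z s k)^2)^(e k - 1) * |z s k * momentRHS N b β c γ Γ (z s) k|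
            ≤ C₁ * G t * (1 + Vf s) := by
          calc ((z s k)^2)^(e k - 1) * |z s k * momentRHS N b β c γ Γ (z s) k|
              ≤ (M^((k:ℕ)+1))^(e k - 1) * (C₁ * G t * M^((k:ℕ)+1)) :=
                mul_le_mul hpk hkey (abs_nonneg _) (by positivity)
            _ = C₁ * G t * ((M^((k:ℕ)+1))^(e k - 1) * M^((k:ℕ)+1)) := by ring
            _ = C₁ * G t * (1 + Vf s) := by rw [hexp]
        have hqL : (e k : ℝ) ≤ (L:ℝ) := by exact_mod_cast heleL k
        have hcoef : (0:ℝ) ≤ C₁ * G t * (1 + Vf s) := by positivity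
        calc (2*(e k:ℝ)) * (((z s k)^2)^(e k - 1) * |z s k * momentRHS N b β c γ Γ (z s) k|)
            ≤ (2*(e k:ℝ)) * (C₁ * G t * (1 + Vf s)) := by
              apply mul_le_mul_of_nonneg_left hstep
              positivity
          _ ≤ 2*(L:ℝ) * (C₁ * G t * (1 + Vf s)) := by
              apply mul_le_mul_of_nonneg_right _ hcoef
              linarith
      calc |Vd s| ≤ ∑ k : Fin N,
            |((2 * e k : ℕ):ℝ) * (z s k)^(2 * e k - 1) * momentRHS N b β c γ Γ (z s) k| := by
            rw [hVddef]
            exact Finset.abs_sum_le_sum_abs _ _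
        _ ≤ ∑ _k : Fin N, 2*(L:ℝ) * (C₁ * G t * (1 + Vf s)) :=
            Finset.sum_le_sum fun k _ => hper k
        _ = (N:ℝ) * (2*(L:ℝ) * (C₁ * G t * (1 + Vf s))) := by
            simp [Finset.sum_const, Finset.card_univ, nsmul_eq_mul]
        _ = KB t * (1 + Vf s) := by rw [hKBdef]; ring
    -- Gronwall on [0, t]
    have hIccsub : Set.Icc (0:ℝ) t ⊆ Set.Ico 0 T := fun r hr =>
      ⟨hr.1, lt_of_le_of_lt hr.2 htT⟩
    have hVcont : ContinuousOn Vf (Set.Icc 0 t) := by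
      intro r hr
      have h1 : HasDerivWithinAt Vf (Vd r) (Set.Ico 0 T) r := by
        rw [hVfdef, hVddef]
        exact HasDerivWithinAt.fun_sum fun k _ => (hsol k r (hIccsub hr)).pow (2 * e k)
      exact (h1.continuousWithinAt).mono hIccsub
    have hinit : ‖Vf 0‖ ≤ V₀ := by
      have : Vf 0 = V₀ := by simp only [hVfdef, hV₀def, hz0]
      rw [this, Real.norm_eq_abs, abs_of_nonneg hV₀0]
    have hgron := norm_le_gronwallBound_of_norm_deriv_right_le (f' := Vd) (K := KB t) (ε := KB t) hVcont
      (fun s hs => hVd' s hs.1 (lt_trans hs.2 htT))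
      hinit
      (fun s hs => by
        rw [Real.norm_eq_abs, Real.norm_eq_abs, abs_of_nonneg (hVf0 s)]
        have := hKbound s hs.1 hs.2.le
        linarith [this])
      t (Set.right_mem_Icc.2 ht0)
    rw [sub_zero, Real.norm_eq_abs, abs_of_nonneg (hVf0 t)] at hgron
    have hVt : Vf t ≤ (V₀ + KB t * t) * Real.exp (KB t * t) :=
      le_trans hgron (gb_le hV₀0 (hKBpos t ht0).le (hKBpos t ht0) ht0)
    -- conclusion
    obtain ⟨M, hM1, hML, hm⟩ := hMB t
    have hM0 : (0:ℝ) ≤ M := by linarith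
    have hS2 : normN N (z t) ^ 2 ≤ (N:ℝ) * M := normN_sq_le N (z t) hM1 hm
    calc normN N (z t) ^ (2*N) = (normN N (z t) ^ 2)^N := by rw [← pow_mul]
      _ ≤ ((N:ℝ)*M)^N := pow_le_pow_left₀ (sq_nonneg _) hS2 N
      _ = (N:ℝ)^N * M^N := mul_pow _ _ _
      _ ≤ (N:ℝ)^N * M^L := mul_le_mul_of_nonneg_left (pow_le_pow_right₀ hM1 hNL)
            (by positivity)
      _ = (N:ℝ)^N * (1 + Vf t) := by rw [hML]
      _ ≤ (N:ℝ)^N * (1 + (V₀ + KB t * t) * Real.exp (KB t * t)) := by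
            apply mul_le_mul_of_nonneg_left _ (by positivity)
            linarith
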